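/- Let F_q be a finite field of odd characteristic and let h, s be positive integers such that h divides q − 1 and s ≤ h < 2s. Let C_1,…,C_s be nonzero linear codes in F_q^m with dim(C_i) = k_i and minimum distance d_i, satisfying C_{h−s+1} ⊇ C_{h−s+2} ⊇ ⋯ ⊇ C_s ⊇ C_s^{⊥E}, and C_1 = ⋯ = C_{h−s} = F_q^m whenever s < h. Then there exists a non-singular by columns (NSC) s×h matrix Ȧ over F_q such that the matrix-product code C = [C_1,…,C_s]·Ȧ is Euclidean dual-containing, has length hm, dimension Σ_{i=1}^s k_i, and minimum distance d(C) ≥ min{ h d_1, (h−1) d_2, …, (h+1−s) d_s }. -/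
import Mathlib


/-- Minimum distance (minimum Hamming weight of a nonzero element) of a set of vectors. -/
noncomputable def dminS {F : Type*} [DecidableEq F] [Zero F] {n : Type*} [Fintype n]
    (C : Set (n → F)) : ℕ :=
  sInf { w | ∃ c ∈ C, c ≠ 0 ∧ hammingNorm c = w }

/-- Euclidean dual of a set of vectors. -/
def dualE {F : Type*} [Field F] {n : Type*} [Fintype n] (C : Set (n → F)) : Set (n → F) :=
  { x | ∀ c ∈ C, ∑ j, x j * c j = 0 }

/-- Hermitian dual (with respect to x ↦ x^q) of a set of vectors over F_{q^2}. -/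
def dualH {F : Type*} [Field F] {n : Type*} [Fintype n] (q : ℕ) (C : Set (n → F)) :
    Set (n → F) :=
  { x | ∀ c ∈ C, ∑ j, x j * (c j) ^ q = 0 }

/-- The matrix-product code `[C_1,…,C_s]·A` as a set of vectors indexed by `Fin h × Fin m`. -/
def mpcSet {F : Type*} [Field F] {s h m : ℕ}
    (C : Fin s → Set (Fin m → F)) (A : Matrix (Fin s) (Fin h) F) :
    Set (Fin h × Fin m → F) :=
  { p | ∃ v : Fin s → Fin m → F, (∀ i, v i ∈ C i) ∧ ∀ x, p x = ∑ i, A i x.1 * v i x.2 }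

/-- A matrix is non-singular by columns. -/
def IsNSC {F : Type*} [Field F] {s h : ℕ} (A : Matrix (Fin s) (Fin h) F) : Prop :=
  ∀ (i : ℕ) (hi : i ≤ s), 0 < i → ∀ c : Fin i → Fin h, StrictMono c →
    (Matrix.of fun r t : Fin i => A (Fin.castLE hi r) (c t)).det ≠ 0

/-- Punctured code: projection of `C` onto the coordinates in `R`. -/
def punct {F : Type*} {n : Type*} (C : Set (n → F)) (R : Finset n) :
    Set ({x // x ∈ R} → F) :=
  (fun c (t : {x // x ∈ R}) => c t.1) '' C

/-- `R` is an (r,δ)-extended recovery set for coordinate `i` of the code `C`. -/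
def IsRecSet {F : Type*} [DecidableEq F] [Zero F] {n : Type*} [Fintype n]
    (C : Set (n → F)) (r δ : ℕ) (i : n) (R : Finset n) : Prop :=
  i ∈ R ∧ R.card ≤ r + δ - 1 ∧ δ ≤ dminS (punct C R)

/-- `C` is a locally recoverable code with locality (r,δ). -/
def IsLRC {F : Type*} [DecidableEq F] [Zero F] {n : Type*} [Fintype n]
    (C : Set (n → F)) (r δ : ℕ) : Prop :=
  ∀ i : n, ∃ R : Finset n, IsRecSet C r δ i R

/-- `wv α i` is the evaluation of the monomial `X^(i-1)` at all points of the field,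
enumerated by `α`. -/
def wv {F : Type*} [Field F] {q : ℕ} (α : Fin q ≃ F) (i : ℕ) : Fin q → F :=
  fun j => (α j) ^ (i - 1)

/-- `av α p i` : the vectors `a_i`, with `a_i = w_i` for `i < q` and
`a_q = w_q + ((p-1)/2) • w_1`. -/
def av {F : Type*} [Field F] {q : ℕ} (α : Fin q ≃ F) (p : ℕ) (i : ℕ) : Fin q → F :=
  if i = q then wv α q + (((p - 1) / 2 : ℕ) : F) • wv α 1 else wv α i

/-- The square matrix whose rows are `a_1, …, a_q`. -/
def Adot {F : Type*} [Field F] {q : ℕ} (α : Fin q ≃ F) (p : ℕ) : Matrix (Fin q) (Fin q) F :=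
  Matrix.of fun r j => av α p ((r : ℕ) + 1) j


namespace Stmt13Aux
/-- Exponent function (ℕ-valued, values in `[0,h)`) for the rows of the NSC matrix. -/
def gfun (h s t : ℕ) : ℕ :=
  if h % 2 = 1 then (if t ≤ (h-1)/2 then (h-1)/2 - t else h + (h-1)/2 - t)
  else if t < h - s then h/2 - 1 - t
  else if t = h - s then h/2
  else if t ≤ h/2 then h/2 - t else h + h/2 - t

/-- Base point of the prefix interval. -/
def afun (h s i : ℕ) : ℕ :=
  if h % 2 = 1 then (if i ≤ (h-1)/2 + 1 then (h-1)/2 + 1 - i else h + (h-1)/2 + 1 - i)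
  else if i ≤ h - s then h/2 - i
  else if i ≤ h/2 + 1 then h/2 + 1 - i else h + h/2 + 1 - i

variable {h s : ℕ}

set_option maxHeartbeats 1000000

lemma gfun_lt (hs : 0 < s) (hsh : s ≤ h) (h2s : h < 2 * s) : ∀ t < s, gfun h s t < h := by
  intro t ht; unfold gfun; split_ifs <;> omega

lemma gfun_inj (hs : 0 < s) (hsh : s ≤ h) (h2s : h < 2 * s) : ∀ t < s, ∀ t' < s, gfun h s t = gfun h s t' → t = t' := by
  intro t ht t' ht'; unfold gfun; split_ifs <;> omega

lemma gfun_P2 (hs : 0 < s) (hsh : s ≤ h) (h2s : h < 2 * s) : ∀ i ≤ s, ∀ t < i, ∃ d, d < i ∧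
    (gfun h s t = afun h s i + d ∨ gfun h s t + h = afun h s i + d) := by
  intro i hi t ht
  refine ⟨if afun h s i ≤ gfun h s t then gfun h s t - afun h s i
    else gfun h s t + h - afun h s i, ?_, ?_⟩ <;>
  · unfold gfun afun; split_ifs <;> omega

lemma gfun_P3 (hs : 0 < s) (hsh : s ≤ h) (h2s : h < 2 * s) : ∀ u < h, (∀ t < s, gfun h s t ≠ u) →
    ∃ t, t < h - s ∧ gfun h s t + u = h := by
  intro u hu hyp
  rcases Nat.mod_two_eq_zero_or_one h with hpar | hpar
  · by_cases c1 : u ≤ h/2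
    · exfalso
      by_cases c2 : u = h/2
      · have := hyp (h - s) (by omega); unfold gfun at this; split_ifs at this <;> omega
      by_cases c3 : s ≤ h/2 + u
      · have := hyp (h/2 - 1 - u) (by omega); unfold gfun at this; split_ifs at this <;> omega
      · have := hyp (h/2 - u) (by omega); unfold gfun at this; split_ifs at this <;> omega
    · by_cases c4 : h + h/2 + 1 ≤ u + s
      · exfalso
        have := hyp (h + h/2 - u) (by omega); unfold gfun at this; split_ifs at this <;> omega
      · exact ⟨u - h/2 - 1, by omega, by unfold gfun; split_ifs <;> omega⟩
  · by_cases c1 : u ≤ (h-1)/2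
    · exfalso
      have := hyp ((h-1)/2 - u) (by omega); unfold gfun at this; split_ifs at this <;> omega
    · by_cases c2 : h + (h-1)/2 + 1 ≤ u + s
      · exfalso
        have := hyp (h + (h-1)/2 - u) (by omega); unfold gfun at this; split_ifs at this <;> omega
      · exact ⟨u - (h-1)/2 - 1, by omega, by unfold gfun; split_ifs <;> omega⟩

lemma gfun_P4 (hs : 0 < s) (hsh : s ≤ h) (h2s : h < 2 * s) : ∀ t, h - s ≤ t → t < s →
    ∃ t', (h - s ≤ t' ∧ t' < s) ∧
      (gfun h s t' + gfun h s t = h ∨ (gfun h s t' = 0 ∧ gfun h s t = 0)) := by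
  intro t ht1 ht2
  refine ⟨if h % 2 = 1 then h - 1 - t else if t = h - s then t else h - t,
    ⟨by split_ifs <;> omega, by split_ifs <;> omega⟩, ?_⟩
  unfold gfun; split_ifs <;> omega


variable {h : ℕ} [NeZero h]

lemma natCast_inj_lt {a b : ℕ} (ha : a < h) (hb : b < h) (hab : (a : ZMod h) = b) : a = b := by
  have := congrArg ZMod.val hab
  rwa [ZMod.val_cast_of_lt ha, ZMod.val_cast_of_lt hb] at this

lemma natCast_eq_neg {a b : ℕ} (ha : a < h) (hb : b < h)
    (hab : a + b = h ∨ (a = 0 ∧ b = 0)) : (a : ZMod h) = -(b : ZMod h) := by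
  have : ((a + b : ℕ) : ZMod h) = 0 := by
    rcases hab with hab | ⟨h1, h2⟩
    · rw [hab]; exact ZMod.natCast_self h
    · simp [h1, h2]
  push_cast at this
  linear_combination this

variable {F : Type*} [Field F] {β : F} (hβ : orderOf β = h)

section beta
include hβ

lemma beta_pow_h : β ^ h = 1 := hβ ▸ pow_orderOf_eq_one β

lemma beta_pow_mod (n : ℕ) : β ^ (n % h) = β ^ n := by
  conv_rhs => rw [← Nat.div_add_mod n h, pow_add, pow_mul, beta_pow_h hβ, one_pow, one_mul]

lemma beta_ne_zero (hh : 0 < h) : β ≠ 0 := by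
  intro h0
  have := beta_pow_h hβ
  rw [h0, zero_pow (by omega)] at this
  exact zero_ne_one this

lemma beta_pow_eq_one_iff {n : ℕ} : β ^ n = 1 ↔ h ∣ n := by
  rw [← hβ]; exact (orderOf_dvd_iff_pow_eq_one).symm

/-- `ψ` : additive character of `ZMod h` with values in `F`. -/
noncomputable def psi (β : F) (z : ZMod h) : F := β ^ z.val

lemma psi_add (z w : ZMod h) : psi β (z + w) = psi β z * psi β w := by
  unfold psi
  rw [ZMod.val_add, beta_pow_mod hβ, pow_add]

omit hβ in
lemma psi_zero : psi β (0 : ZMod h) = 1 := by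
  unfold psi; rw [ZMod.val_zero, pow_zero]

lemma psi_mul (z w : ZMod h) : psi β (z * w) = (psi β z) ^ w.val := by
  unfold psi
  rw [ZMod.val_mul, beta_pow_mod hβ, pow_mul]

lemma psi_ne_zero (hh : 0 < h) (z : ZMod h) : psi β z ≠ 0 :=
  pow_ne_zero _ (beta_ne_zero hβ hh)

lemma psi_eq_one_iff (z : ZMod h) : psi β z = 1 ↔ z = 0 := by
  unfold psi
  rw [beta_pow_eq_one_iff hβ]
  constructor
  · intro hd
    have hlt := ZMod.val_lt z
    have : z.val = 0 := by
      rcases Nat.eq_zero_or_pos z.val with h0 | hpos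
      · exact h0
      · have := Nat.le_of_dvd hpos hd; omega
    exact (ZMod.val_eq_zero z).mp this
  · rintro rfl; simp

omit hβ in
lemma sum_val_pow (y : F) : ∑ f : ZMod h, y ^ f.val = ∑ a ∈ Finset.range h, y ^ a := by
  refine Finset.sum_nbij' (fun f => f.val) (fun a => (a : ZMod h)) ?_ ?_ ?_ ?_ ?_
  · intro f _; exact Finset.mem_range.mpr (ZMod.val_lt f)
  · intro a _; exact Finset.mem_univ _
  · intro f _; exact ZMod.natCast_rightInverse f
  · intro a ha; exact ZMod.val_cast_of_lt (Finset.mem_range.mp ha)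
  · intro f _; rfl

omit hβ in
lemma geom_sum_h {y : F} (hy1 : y ≠ 1) (hyh : y ^ h = 1) :
    ∑ a ∈ Finset.range h, y ^ a = 0 := by
  rw [geom_sum_eq hy1, hyh, sub_self, zero_div]

lemma sum_psi_fin (hh : 0 < h) (k : ZMod h) :
    ∑ j : Fin h, psi β (k * ((j : ℕ) : ZMod h)) = if k = 0 then (h : F) else 0 := by
  have hterm : ∀ j : Fin h, psi β (k * ((j : ℕ) : ZMod h)) = (psi β k) ^ (j : ℕ) := by
    intro j
    rw [psi_mul hβ, ZMod.val_cast_of_lt j.isLt]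
  simp only [hterm]
  rw [Fin.sum_univ_eq_sum_range (fun a => (psi β k) ^ a) h]
  split_ifs with hk
  · subst hk; rw [psi_zero]; simp
  · refine geom_sum_h ?_ ?_
    · intro hy; exact hk ((psi_eq_one_iff hβ k).mp hy)
    · unfold psi
      rw [← pow_mul, mul_comm, pow_mul, beta_pow_h hβ, one_pow]

lemma sum_psi_zmod (hh : 0 < h) (k : ZMod h) :
    ∑ f : ZMod h, psi β (f * k) = if k = 0 then (h : F) else 0 := by
  have hterm : ∀ f : ZMod h, psi β (f * k) = (psi β k) ^ f.val := by
    intro f; rw [mul_comm, psi_mul hβ]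
  simp only [hterm]
  rw [sum_val_pow]
  split_ifs with hk
  · subst hk; rw [psi_zero]; simp
  · refine geom_sum_h ?_ ?_
    · intro hy; exact hk ((psi_eq_one_iff hβ k).mp hy)
    · unfold psi
      rw [← pow_mul, mul_comm, pow_mul, beta_pow_h hβ, one_pow]

lemma beta_pow_inj (hh : 0 < h) {a b : ℕ} (ha : a < h) (hb : b < h)
    (hab : β ^ a = β ^ b) : a = b := by
  wlog hle : a ≤ b generalizing a b
  · exact (this hb ha hab.symm (le_of_not_ge hle)).symm
  have h1 : β ^ a * β ^ (b - a) = β ^ a * 1 := by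
    rw [mul_one, ← pow_add]
    rw [show a + (b - a) = b by omega, hab]
  have h2 : β ^ (b - a) = 1 :=
    mul_left_cancel₀ (pow_ne_zero a (beta_ne_zero hβ hh)) h1
  have h3 : h ∣ b - a := (beta_pow_eq_one_iff hβ).mp h2
  rcases Nat.eq_zero_or_pos (b - a) with h0 | hpos
  · omega
  · have := Nat.le_of_dvd hpos h3; omega

end beta

open Matrix in

lemma nsc_det [NeZero h] (hs : 0 < s) (hsh : s ≤ h) (h2s : h < 2 * s)
    (hβ : orderOf β = h) (i : ℕ) (hi : i ≤ s) (ipos : 0 < i)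
    (c : Fin i → Fin h) (hc : StrictMono c) :
    (Matrix.of fun r t : Fin i =>
      β ^ (gfun h s ((Fin.castLE hi r) : ℕ) * ((c t) : ℕ))).det ≠ 0 := by
  have hh : 0 < h := lt_of_lt_of_le hs hsh
  set x : Fin i → F := fun t => β ^ ((c t : ℕ)) with hx
  have hP2 := gfun_P2 (h := h) (s := s) hs hsh h2s i hi
  choose dfun hdlt hdisj using fun r : Fin i => hP2 (r : ℕ) r.isLt
  set a := afun h s i with ha
  -- x t ^ h = 1
  have hxh : ∀ t, x t ^ h = 1 := by
    intro t
    rw [hx]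
    simp only
    rw [← pow_mul, mul_comm, pow_mul, beta_pow_h hβ, one_pow]
  -- entry rewriting
  have hentry : ∀ (r t : Fin i),
      β ^ (gfun h s ((Fin.castLE hi r) : ℕ) * ((c t) : ℕ)) = x t ^ a * x t ^ dfun r := by
    intro r t
    have h1 : β ^ (gfun h s ((Fin.castLE hi r) : ℕ) * ((c t) : ℕ))
        = x t ^ gfun h s (r : ℕ) := by
      rw [mul_comm, pow_mul]
      rfl
    rw [h1]
    rcases hdisj r with hcase | hcase
    · rw [hcase, pow_add]
    · rw [← pow_add]
      calc x t ^ gfun h s (r : ℕ)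
          = x t ^ gfun h s (r : ℕ) * x t ^ h := by rw [hxh t, mul_one]
        _ = x t ^ (gfun h s (r : ℕ) + h) := by rw [pow_add]
        _ = x t ^ (a + dfun r) := by rw [hcase]
  -- the permutation
  have hDinj : Function.Injective (fun r : Fin i => (⟨dfun r, hdlt r⟩ : Fin i)) := by
    intro r r' hrr'
    have hd : dfun r = dfun r' := congrArg Fin.val hrr'
    have hg1 := gfun_lt (h := h) (s := s) hs hsh h2s (r : ℕ) (lt_of_lt_of_le r.isLt hi)
    have hg2 := gfun_lt (h := h) (s := s) hs hsh h2s (r' : ℕ) (lt_of_lt_of_le r'.isLt hi)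
    have hgg : gfun h s (r : ℕ) = gfun h s (r' : ℕ) := by
      rcases hdisj r with h1 | h1 <;> rcases hdisj r' with h2 | h2 <;> omega
    exact Fin.ext (gfun_inj hs hsh h2s (r : ℕ) (lt_of_lt_of_le r.isLt hi)
      (r' : ℕ) (lt_of_lt_of_le r'.isLt hi) hgg)
  have hDbij := (Finite.injective_iff_bijective).mp hDinj
  set σ : Equiv.Perm (Fin i) := Equiv.ofBijective _ hDbij with hσ
  -- matrix identity
  have hM : (Matrix.of fun r t : Fin i =>
      β ^ (gfun h s ((Fin.castLE hi r) : ℕ) * ((c t) : ℕ)))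
      = Matrix.of fun r t : Fin i =>
        (x t ^ a) * (((Matrix.vandermonde x)ᵀ.submatrix σ id) r t) := by
    ext r t
    simp only [Matrix.of_apply, Matrix.submatrix_apply, Matrix.transpose_apply,
      Matrix.vandermonde_apply, id]
    rw [hentry r t]
    rfl
  rw [hM]
  have h2 := Matrix.det_mul_row (fun t : Fin i => x t ^ a)
    ((Matrix.vandermonde x)ᵀ.submatrix σ id)
  rw [h2, Matrix.det_permute, Matrix.det_transpose]
  have hxinj : Function.Injective x := by
    intro t t' htt'
    have := beta_pow_inj hβ hh (c t).isLt (c t').isLt htt'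
    exact hc.injective (Fin.ext this)
  have hvdm : (Matrix.vandermonde x).det ≠ 0 :=
    Matrix.det_vandermonde_ne_zero_iff.mpr hxinj
  have hsgn : ((Equiv.Perm.sign σ : ℤ) : F) ≠ 0 := by
    rcases Int.units_eq_one_or (Equiv.Perm.sign σ) with hs1 | hs1 <;>
      rw [hs1] <;> simp
  have hprod : (∏ t : Fin i, x t ^ a) ≠ 0 := by
    apply Finset.prod_ne_zero_iff.mpr
    intro t _
    exact pow_ne_zero _ (pow_ne_zero _ (beta_ne_zero hβ hh))
  intro hzero
  rcases mul_eq_zero.mp hzero with h0 | h0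
  · exact hprod h0
  rcases mul_eq_zero.mp h0 with h0' | h0'
  · exact hsgn h0'
  · exact hvdm h0'


/-- Sum restriction to an initial segment when the tail vanishes. -/
lemma sum_restrict {M : Type*} [AddCommMonoid M] {s : ℕ} (f : Fin s → M) (ℓ : Fin s)
    (hls : (ℓ : ℕ) + 1 ≤ s) (h0 : ∀ i, ℓ < i → f i = 0) :
    ∑ i, f i = ∑ r : Fin ((ℓ : ℕ) + 1), f (Fin.castLE hls r) := by
  have h1 : ∑ r : Fin ((ℓ : ℕ) + 1), f (Fin.castLE hls r)
      = ∑ i ∈ Finset.univ.map (Fin.castLEEmb hls), f i := by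
    rw [Finset.sum_map]
    rfl
  rw [h1]
  symm
  apply Finset.sum_subset (Finset.subset_univ _)
  intro i _ hi
  apply h0
  simp only [Finset.mem_map, Finset.mem_univ, true_and] at hi
  by_contra hle
  push_neg at hle
  exact hi ⟨⟨(i : ℕ), by omega⟩, by ext; simp⟩

end Stmt13Aux


/-- existence of an NSC `s×h` matrix giving a Euclidean dual-containing
matrix-product code, when `h ∣ q-1` and `s ≤ h < 2s`. -/
theorem stmt13 {F : Type*} [Field F] [Fintype F] [DecidableEq F] {q h s m : ℕ}
    (hchar : Odd (ringChar F)) (hcard : Fintype.card F = q)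
    (hs : 0 < s) (hsh : s ≤ h) (hh2s : h < 2 * s)
    (hdvd : h ∣ (q - 1))
    (C : Fin s → Submodule F (Fin m → F)) (k d : Fin s → ℕ)
    (hnz : ∀ i, C i ≠ ⊥)
    (hk : ∀ i, Module.finrank F (C i) = k i)
    (hd : ∀ i, dminS ((C i : Set (Fin m → F))) = d i)
    (hnest : ∀ i j : Fin s, h - s ≤ (i : ℕ) → i ≤ j → C j ≤ C i)
    (hlast : ∀ i : Fin s, (i : ℕ) = s - 1 →
      dualE ((C i : Set (Fin m → F))) ⊆ (C i : Set (Fin m → F)))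
    (hfull : ∀ i : Fin s, (i : ℕ) < h - s → C i = ⊤) :
    ∃ A : Matrix (Fin s) (Fin h) F, IsNSC A ∧
      ∃ S : Submodule F (Fin h × Fin m → F),
        (S : Set (Fin h × Fin m → F)) = mpcSet (fun i => (C i : Set (Fin m → F))) A ∧
        dualE (S : Set (Fin h × Fin m → F)) ⊆ (S : Set (Fin h × Fin m → F)) ∧
        Module.finrank F S = ∑ i, k i ∧
        sInf { v | ∃ i : Fin s, v = (h - (i : ℕ)) * d i } ≤
          dminS ((S : Set (Fin h × Fin m → F))) := by
  classical
  have hh : 0 < h := lt_of_lt_of_le hs hsh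
  haveI : NeZero h := ⟨by omega⟩
  have hq2 : 2 ≤ q := by rw [← hcard]; exact Fintype.one_lt_card
  -- obtain a primitive h-th root of unity β
  obtain ⟨gen, hgen⟩ := IsCyclic.exists_ofOrder_eq_natCard (α := Fˣ)
  have hcardu : Nat.card Fˣ = q - 1 := by
    rw [Nat.card_units, Nat.card_eq_fintype_card, hcard]
  obtain ⟨cq, hcq⟩ := hdvd
  have hcq0 : 0 < cq := by
    rcases Nat.eq_zero_or_pos cq with rfl | h'
    · omega
    · exact h'
  set ζ : Fˣ := gen ^ ((q - 1) / h) with hζ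
  have hordζ : orderOf ζ = h := by
    rw [hζ, orderOf_pow, hgen, hcardu, hcq, Nat.mul_div_cancel_left _ hh]
    have hgcd : (h * cq).gcd cq = cq := Nat.gcd_eq_right ⟨h, by ring⟩
    rw [hgcd, Nat.mul_div_cancel _ hcq0]
  set β : F := (ζ : F) with hβdef
  have hβ : orderOf β = h := by rw [hβdef, orderOf_units]; exact hordζ
  -- h is invertible in F
  have hchF : (h : F) ≠ 0 := by
    intro h0
    set p := ringChar F with hpdef
    haveI : CharP F p := ringChar.charP F
    obtain ⟨n, hpp, hcardp⟩ := FiniteField.card F p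
    have hpd : p ∣ h := (CharP.cast_eq_zero_iff F p h).mp h0
    have hpq : p ∣ q := by
      rw [← hcard, hcardp]; exact dvd_pow_self p (by positivity)
    have hpq1 : p ∣ q - 1 := hpd.trans ⟨cq, hcq⟩
    have hp1 : p ∣ q - (q - 1) := Nat.dvd_sub hpq hpq1
    have h1 : q - (q - 1) = 1 := by omega
    rw [h1] at hp1
    exact hpp.one_lt.ne' (Nat.dvd_one.mp hp1)
  -- the exponents and the matrix
  set E : Fin s → ZMod h := fun i => ((Stmt13Aux.gfun h s (i : ℕ) : ℕ) : ZMod h) with hE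
  set A : Matrix (Fin s) (Fin h) F :=
    Matrix.of fun i j => β ^ (Stmt13Aux.gfun h s (i : ℕ) * (j : ℕ)) with hAdef
  have hglt : ∀ i : Fin s, Stmt13Aux.gfun h s (i : ℕ) < h :=
    fun i => Stmt13Aux.gfun_lt hs hsh hh2s (i : ℕ) i.isLt
  have hNSC : IsNSC A := by
    intro i hi ipos c hc
    exact Stmt13Aux.nsc_det hs hsh hh2s hβ i hi ipos c hc
  -- bridge between A and the character ψ
  have hA : ∀ (i : Fin s) (j : Fin h),
      A i j = Stmt13Aux.psi β (E i * ((j : ℕ) : ZMod h)) := by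
    intro i j
    unfold Stmt13Aux.psi
    rw [hE]
    simp only
    rw [ZMod.val_mul, ZMod.val_cast_of_lt (hglt i), ZMod.val_cast_of_lt j.isLt,
      Stmt13Aux.beta_pow_mod hβ]
    rfl
  have hEinj : Function.Injective E := by
    intro i i' hEe
    refine Fin.ext (Stmt13Aux.gfun_inj hs hsh hh2s _ i.isLt _ i'.isLt ?_)
    exact Stmt13Aux.natCast_inj_lt (hglt i) (hglt i') hEe
  -- the linear maps
  set T : (Fin s → Fin m → F) →ₗ[F] (Fin h × Fin m → F) :=
    { toFun := fun v => fun jt => ∑ i, A i jt.1 * v i jt.2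
      map_add' := by
        intro v w
        funext jt
        simp only [Pi.add_apply]
        rw [← Finset.sum_add_distrib]
        exact Finset.sum_congr rfl fun i _ => by ring
      map_smul' := by
        intro r v
        funext jt
        simp only [Pi.smul_apply, smul_eq_mul, RingHom.id_apply]
        rw [Finset.mul_sum]
        exact Finset.sum_congr rfl fun i _ => by ring } with hT
  set Φ : (∀ i : Fin s, ↥(C i)) →ₗ[F] (Fin s → Fin m → F) :=
    { toFun := fun c i => (c i : Fin m → F)
      map_add' := fun a b => rfl
      map_smul' := fun r a => rfl } with hΦ
  set S : Submodule F (Fin h × Fin m → F) := LinearMap.range (T ∘ₗ Φ) with hS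
  have hSmem : ∀ y : Fin h × Fin m → F, y ∈ S ↔
      ∃ v : Fin s → Fin m → F, (∀ i, v i ∈ C i) ∧
        ∀ jt : Fin h × Fin m, y jt = ∑ i, A i jt.1 * v i jt.2 := by
    intro y
    constructor
    · rintro ⟨cvec, rfl⟩
      exact ⟨fun i => (cvec i : Fin m → F), fun i => (cvec i).2, fun jt => rfl⟩
    · rintro ⟨v, hv, hy⟩
      refine ⟨fun i => ⟨v i, hv i⟩, ?_⟩
      funext jt
      exact (hy jt).symm
  -- single-row codewords
  have hrowS : ∀ (i : Fin s) (u : Fin m → F), u ∈ C i →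
      (fun jt : Fin h × Fin m => A i jt.1 * u jt.2) ∈ S := by
    intro i u hu
    refine (hSmem _).mpr ⟨Pi.single i u, ?_, ?_⟩
    · intro i'
      rcases eq_or_ne i' i with rfl | hne
      · rw [Pi.single_eq_same]; exact hu
      · rw [Pi.single_eq_of_ne hne]; exact (C i').zero_mem
    · intro jt
      rw [Finset.sum_eq_single i]
      · rw [Pi.single_eq_same]
      · intro i' _ hne
        rw [Pi.single_eq_of_ne hne, Pi.zero_apply, mul_zero]
      · intro habs
        exact absurd (Finset.mem_univ i) habs
  -- the last code index and the dual chain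
  set last : Fin s := ⟨s - 1, by omega⟩ with hlastdef
  have hchain : ∀ (i i' : Fin s), h - s ≤ (i : ℕ) → h - s ≤ (i' : ℕ) →
      ∀ u : Fin m → F, (∀ w ∈ C i', ∑ t, u t * w t = 0) → u ∈ C i := by
    intro i i' hi hi' u hu
    have h1 : u ∈ dualE ((C last : Set (Fin m → F))) := by
      intro w hw
      exact hu w (hnest i' last hi' (by simp [hlastdef, Fin.le_def]; omega) hw)
    have h2 : u ∈ C last := hlast last (by simp [hlastdef]) h1
    exact hnest i last hi (by simp [hlastdef, Fin.le_def]; omega) h2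
  refine ⟨A, hNSC, S, ?_, ?_, ?_, ?_⟩
  · -- set equality with mpcSet
    apply Set.ext
    intro y
    rw [SetLike.mem_coe]
    exact hSmem y
  · -- dual containment
    intro x hx
    set W : ZMod h → (Fin m → F) :=
      fun f => fun t => ∑ j : Fin h, x (j, t) * Stmt13Aux.psi β (f * ((j : ℕ) : ZMod h))
      with hWdef
    -- the dual conditions
    have hWdual : ∀ i : Fin s, ∀ u, u ∈ C i → ∑ t, W (E i) t * u t = 0 := by
      intro i u hu
      have h0 := hx _ (SetLike.mem_coe.mpr (hrowS i u hu))
      rw [Fintype.sum_prod_type, Finset.sum_comm] at h0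
      calc ∑ t, W (E i) t * u t
          = ∑ t, ∑ j, x (j, t) * (A i j * u t) := by
            apply Finset.sum_congr rfl
            intro t _
            rw [hWdef]
            simp only
            rw [Finset.sum_mul]
            apply Finset.sum_congr rfl
            intro j _
            rw [hA i j]
            ring
        _ = 0 := h0
    -- evaluation of W at full-code rows gives 0
    have hWfull : ∀ i : Fin s, (i : ℕ) < h - s → W (E i) = 0 := by
      intro i hilt
      funext t'
      have hu : Pi.single t' (1 : F) ∈ C i := by
        rw [hfull i hilt]; trivial
      have h0 := hWdual i (Pi.single t' 1) hu
      rw [Finset.sum_eq_single t'] at h0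
      · rwa [Pi.single_eq_same, mul_one] at h0
      · intro t'' _ hne
        rw [Pi.single_eq_of_ne hne, mul_zero]
      · intro habs
        exact absurd (Finset.mem_univ t') habs
    -- W vanishes off the range of E
    have hWzero : ∀ f : ZMod h, (¬ ∃ i : Fin s, E i = f) → W (-f) = 0 := by
      intro f hf
      have hfval : ∀ t' < s, Stmt13Aux.gfun h s t' ≠ f.val := by
        intro t' ht' hgg
        refine hf ⟨⟨t', ht'⟩, ?_⟩
        rw [hE]
        simp only
        rw [hgg]
        exact ZMod.natCast_rightInverse f
      obtain ⟨t0, ht0, hsum⟩ :=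
        Stmt13Aux.gfun_P3 hs hsh hh2s f.val (ZMod.val_lt f) hfval
      have ht0s : t0 < s := by omega
      have hEt0 : E ⟨t0, ht0s⟩ = -f := by
        have hcast : ((Stmt13Aux.gfun h s t0 : ℕ) : ZMod h) = -((f.val : ℕ) : ZMod h) :=
          Stmt13Aux.natCast_eq_neg (Stmt13Aux.gfun_lt hs hsh hh2s t0 ht0s)
            (ZMod.val_lt f) (Or.inl hsum)
        rw [hE]
        simp only
        rw [hcast, ZMod.natCast_rightInverse f]
      rw [← hEt0]
      exact hWfull ⟨t0, ht0s⟩ ht0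
    -- Fourier reconstruction
    have hrecon : ∀ (j : Fin h) (t : Fin m),
        ∑ i : Fin s, A i j * W (-(E i)) t = (h : F) * x (j, t) := by
      intro j t
      have himg : ∑ i : Fin s, A i j * W (-(E i)) t
          = ∑ f ∈ Finset.univ.image E,
              Stmt13Aux.psi β (f * ((j : ℕ) : ZMod h)) * W (-f) t := by
        rw [Finset.sum_image (fun a _ b _ hab => hEinj hab)]
        exact Finset.sum_congr rfl fun i _ => by rw [hA i j]
      have hfill : ∑ f ∈ Finset.univ.image E,
            Stmt13Aux.psi β (f * ((j : ℕ) : ZMod h)) * W (-f) t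
          = ∑ f : ZMod h, Stmt13Aux.psi β (f * ((j : ℕ) : ZMod h)) * W (-f) t := by
        apply Finset.sum_subset (Finset.subset_univ _)
        intro f _ hfnot
        have : ¬ ∃ i : Fin s, E i = f := by
          intro ⟨i, hi⟩
          exact hfnot (Finset.mem_image.mpr ⟨i, Finset.mem_univ i, hi⟩)
        rw [hWzero f this, Pi.zero_apply, mul_zero]
      have hterm : ∀ f : ZMod h,
          Stmt13Aux.psi β (f * ((j : ℕ) : ZMod h)) * W (-f) t
            = ∑ j' : Fin h, x (j', t) *
                Stmt13Aux.psi β (f * (((j : ℕ) : ZMod h) - ((j' : ℕ) : ZMod h))) := by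
        intro f
        rw [hWdef]
        simp only
        rw [Finset.mul_sum]
        apply Finset.sum_congr rfl
        intro j' _
        have hψ : Stmt13Aux.psi β (f * ((j : ℕ) : ZMod h)) *
            Stmt13Aux.psi β ((-f) * ((j' : ℕ) : ZMod h))
            = Stmt13Aux.psi β (f * (((j : ℕ) : ZMod h) - ((j' : ℕ) : ZMod h))) := by
          rw [← Stmt13Aux.psi_add hβ]
          congr 1
          ring
        calc Stmt13Aux.psi β (f * ((j : ℕ) : ZMod h)) *
              (x (j', t) * Stmt13Aux.psi β ((-f) * ((j' : ℕ) : ZMod h)))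
            = x (j', t) * (Stmt13Aux.psi β (f * ((j : ℕ) : ZMod h)) *
                Stmt13Aux.psi β ((-f) * ((j' : ℕ) : ZMod h))) := by ring
          _ = x (j', t) *
                Stmt13Aux.psi β (f * (((j : ℕ) : ZMod h) - ((j' : ℕ) : ZMod h))) := by
              rw [hψ]
      have hswap : ∑ f : ZMod h, Stmt13Aux.psi β (f * ((j : ℕ) : ZMod h)) * W (-f) t
          = ∑ j' : Fin h, ∑ f : ZMod h, x (j', t) *
              Stmt13Aux.psi β (f * (((j : ℕ) : ZMod h) - ((j' : ℕ) : ZMod h))) := by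
        rw [Finset.sum_congr rfl fun f _ => hterm f]
        exact Finset.sum_comm
      have hinner : ∀ j' : Fin h,
          ∑ f : ZMod h, x (j', t) *
              Stmt13Aux.psi β (f * (((j : ℕ) : ZMod h) - ((j' : ℕ) : ZMod h)))
            = x (j', t) *
              (if ((j : ℕ) : ZMod h) - ((j' : ℕ) : ZMod h) = 0 then (h : F) else 0) := by
        intro j'
        rw [← Finset.mul_sum, Stmt13Aux.sum_psi_zmod hβ hh]
      rw [himg, hfill, hswap]
      rw [Finset.sum_congr rfl fun j' _ => hinner j']
      rw [Finset.sum_eq_single j]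
      · rw [sub_self, if_pos rfl]; ring
      · intro j' _ hne
        rw [if_neg, mul_zero]
        intro hsub
        have : ((j : ℕ) : ZMod h) = ((j' : ℕ) : ZMod h) := by
          linear_combination hsub
        exact hne (Fin.ext (Stmt13Aux.natCast_inj_lt j.isLt j'.isLt this).symm)
      · intro habs
        exact absurd (Finset.mem_univ j) habs
    -- the decomposition vectors
    set v : Fin s → (Fin m → F) := fun i => ((h : F)⁻¹) • W (-(E i)) with hv
    have hvmem : ∀ i, v i ∈ C i := by
      intro i
      have hWmem : W (-(E i)) ∈ C i := by
        by_cases hifull : (i : ℕ) < h - s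
        · rw [hfull i hifull]; trivial
        · obtain ⟨t', ⟨ht'1, ht'2⟩, hsum⟩ :=
            Stmt13Aux.gfun_P4 hs hsh hh2s (i : ℕ) (by omega) i.isLt
          have hEt' : E ⟨t', ht'2⟩ = -(E i) := by
            have hcast : ((Stmt13Aux.gfun h s t' : ℕ) : ZMod h)
                = -((Stmt13Aux.gfun h s (i : ℕ) : ℕ) : ZMod h) :=
              Stmt13Aux.natCast_eq_neg (Stmt13Aux.gfun_lt hs hsh hh2s t' ht'2)
                (hglt i) hsum
            rw [hE]
            simp only
            rw [hcast]
          rw [← hEt']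
          exact hchain i ⟨t', ht'2⟩ (by omega) ht'1 _
            (fun w hw => hWdual ⟨t', ht'2⟩ w hw)
      exact Submodule.smul_mem _ _ hWmem
    rw [SetLike.mem_coe]
    refine (hSmem x).mpr ⟨v, hvmem, ?_⟩
    intro jt
    have hr := hrecon jt.1 jt.2
    have : ∑ i : Fin s, A i jt.1 * v i jt.2
        = (h : F)⁻¹ * ∑ i : Fin s, A i jt.1 * W (-(E i)) jt.2 := by
      rw [Finset.mul_sum]
      apply Finset.sum_congr rfl
      intro i _
      rw [hv]
      simp only [Pi.smul_apply, smul_eq_mul]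
      ring
    rw [this, hr]
    field_simp
  · -- dimension
    have hinj : Function.Injective (T ∘ₗ Φ) := by
      rw [injective_iff_map_eq_zero]
      intro c hc0
      have hpt : ∀ (jj : Fin h) (tt : Fin m),
          ∑ i, A i jj * (c i : Fin m → F) tt = 0 := by
        intro jj tt
        exact congrFun hc0 (jj, tt)
      have hext : ∀ (i0 : Fin s) (tt : Fin m), (c i0 : Fin m → F) tt = 0 := by
        intro i0 tt
        have hsum0 : ∑ j : Fin h,
            Stmt13Aux.psi β ((-(E i0)) * ((j : ℕ) : ZMod h)) *
              (∑ i, A i j * (c i : Fin m → F) tt) = 0 := by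
          apply Finset.sum_eq_zero
          intro j _
          rw [hpt j tt, mul_zero]
        have hsw : ∑ j : Fin h,
            Stmt13Aux.psi β ((-(E i0)) * ((j : ℕ) : ZMod h)) *
              (∑ i, A i j * (c i : Fin m → F) tt)
            = ∑ i : Fin s, (c i : Fin m → F) tt *
                (∑ j : Fin h, Stmt13Aux.psi β ((E i - E i0) * ((j : ℕ) : ZMod h))) := by
          calc ∑ j : Fin h,
              Stmt13Aux.psi β ((-(E i0)) * ((j : ℕ) : ZMod h)) *
                (∑ i, A i j * (c i : Fin m → F) tt)
              = ∑ j : Fin h, ∑ i : Fin s,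
                  Stmt13Aux.psi β ((-(E i0)) * ((j : ℕ) : ZMod h)) *
                    (A i j * (c i : Fin m → F) tt) := by
                apply Finset.sum_congr rfl
                intro j _
                rw [Finset.mul_sum]
            _ = ∑ i : Fin s, ∑ j : Fin h,
                  Stmt13Aux.psi β ((-(E i0)) * ((j : ℕ) : ZMod h)) *
                    (A i j * (c i : Fin m → F) tt) := Finset.sum_comm
            _ = ∑ i : Fin s, (c i : Fin m → F) tt *
                (∑ j : Fin h, Stmt13Aux.psi β ((E i - E i0) * ((j : ℕ) : ZMod h))) := by
                apply Finset.sum_congr rfl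
                intro i _
                rw [Finset.mul_sum]
                apply Finset.sum_congr rfl
                intro j _
                rw [hA i j]
                have hψ : Stmt13Aux.psi β ((-(E i0)) * ((j : ℕ) : ZMod h)) *
                    Stmt13Aux.psi β (E i * ((j : ℕ) : ZMod h))
                    = Stmt13Aux.psi β ((E i - E i0) * ((j : ℕ) : ZMod h)) := by
                  rw [← Stmt13Aux.psi_add hβ]
                  congr 1
                  ring
                calc Stmt13Aux.psi β ((-(E i0)) * ((j : ℕ) : ZMod h)) *
                      (Stmt13Aux.psi β (E i * ((j : ℕ) : ZMod h)) * (c i : Fin m → F) tt)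
                    = (c i : Fin m → F) tt *
                      (Stmt13Aux.psi β ((-(E i0)) * ((j : ℕ) : ZMod h)) *
                        Stmt13Aux.psi β (E i * ((j : ℕ) : ZMod h))) := by ring
                  _ = (c i : Fin m → F) tt *
                        Stmt13Aux.psi β ((E i - E i0) * ((j : ℕ) : ZMod h)) := by rw [hψ]
        rw [hsw] at hsum0
        have hinner : ∀ i : Fin s,
            (c i : Fin m → F) tt *
                (∑ j : Fin h, Stmt13Aux.psi β ((E i - E i0) * ((j : ℕ) : ZMod h)))
            = (c i : Fin m → F) tt * (if E i - E i0 = 0 then (h : F) else 0) := by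
          intro i
          rw [Stmt13Aux.sum_psi_fin hβ hh]
        rw [Finset.sum_congr rfl fun i _ => hinner i] at hsum0
        rw [Finset.sum_eq_single i0] at hsum0
        · rw [sub_self, if_pos rfl] at hsum0
          rcases mul_eq_zero.mp hsum0 with h' | h'
          · exact h'
          · exact absurd h' hchF
        · intro i _ hne
          rw [if_neg, mul_zero]
          intro hsub
          apply hne
          apply hEinj
          have := sub_eq_zero.mp hsub
          exact this
        · intro habs
          exact absurd (Finset.mem_univ i0) habs
      funext i
      exact Subtype.ext (funext fun tt => hext i tt)
    rw [hS]
    rw [LinearMap.finrank_range_of_inj hinj]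
    rw [Module.finrank_pi_fintype F]
    exact Finset.sum_congr rfl fun i _ => hk i
  · -- minimum distance
    obtain ⟨u0, hu0mem, hu0ne⟩ := Submodule.exists_mem_ne_zero_of_ne_bot (hnz ⟨0, hs⟩)
    set c0 : Fin h × Fin m → F := fun jt => A ⟨0, hs⟩ jt.1 * u0 jt.2 with hc0
    have hc0S : c0 ∈ S := hrowS ⟨0, hs⟩ u0 hu0mem
    have hc0ne : c0 ≠ 0 := by
      obtain ⟨t0, ht0⟩ := Function.ne_iff.mp hu0ne
      intro habs
      have := congrFun habs (⟨0, hh⟩, t0)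
      rw [hc0] at this
      simp only [Pi.zero_apply] at this
      apply ht0
      have hA0 : A ⟨0, hs⟩ (⟨0, hh⟩ : Fin h) = 1 := by
        rw [hAdef]
        simp only [Matrix.of_apply]
        norm_num
      rw [hA0, one_mul] at this
      exact this
    have hWSne : { w | ∃ c ∈ (S : Set (Fin h × Fin m → F)), c ≠ 0 ∧
        hammingNorm c = w }.Nonempty :=
      ⟨hammingNorm c0, c0, SetLike.mem_coe.mpr hc0S, hc0ne, rfl⟩
    unfold dminS
    apply le_csInf hWSne
    rintro w ⟨p, hpS, hpne, rfl⟩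
    obtain ⟨v, hvC, hvp⟩ := (hSmem p).mp (SetLike.mem_coe.mp hpS)
    have hvsome : ∃ i, v i ≠ 0 := by
      by_contra hall
      push_neg at hall
      apply hpne
      funext jt
      rw [hvp jt]
      simp only [Pi.zero_apply]
      apply Finset.sum_eq_zero
      intro i _
      rw [hall i, Pi.zero_apply, mul_zero]
    set Sne : Finset (Fin s) := Finset.univ.filter (fun i => v i ≠ 0) with hSne
    have hSnene : Sne.Nonempty := by
      obtain ⟨i, hi⟩ := hvsome
      exact ⟨i, by rw [hSne]; exact Finset.mem_filter.mpr ⟨Finset.mem_univ i, hi⟩⟩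
    set ℓ : Fin s := Sne.max' hSnene with hℓ
    have hℓne : v ℓ ≠ 0 := (Finset.mem_filter.mp (Sne.max'_mem hSnene)).2
    have hℓmax : ∀ i, ℓ < i → v i = 0 := by
      intro i hi
      by_contra hne
      have : i ∈ Sne := Finset.mem_filter.mpr ⟨Finset.mem_univ i, hne⟩
      exact absurd (Sne.le_max' i this) (not_le.mpr hi)
    have hℓ1s : (ℓ : ℕ) + 1 ≤ s := ℓ.isLt
    -- column bound
    have hcol : ∀ t : Fin m, v ℓ t ≠ 0 →
        (h - (ℓ : ℕ)) ≤ (Finset.univ.filter (fun j : Fin h => p (j, t) ≠ 0)).card := by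
      intro t hvt
      by_contra hlt
      push_neg at hlt
      have hsplit := Finset.card_filter_add_card_filter_not
        (s := (Finset.univ : Finset (Fin h))) (p := fun j : Fin h => p (j, t) = 0)
      have hcardh : (Finset.univ : Finset (Fin h)).card = h := Finset.card_fin h
      have hfneq : (Finset.univ.filter (fun j : Fin h => ¬ p (j, t) = 0))
          = (Finset.univ.filter (fun j : Fin h => p (j, t) ≠ 0)) := rfl
      have hZcard : (ℓ : ℕ) + 1 ≤
          (Finset.univ.filter (fun j : Fin h => p (j, t) = 0)).card := by
        rw [hfneq] at hsplit
        omega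
      obtain ⟨Z, hZsub, hZc⟩ := Finset.exists_subset_card_eq hZcard
      set cemb := Z.orderEmbOfFin hZc with hcemb
      have hdet := hNSC ((ℓ : ℕ) + 1) hℓ1s (by omega) (fun r => cemb r)
        cemb.strictMono
      set N : Matrix (Fin ((ℓ : ℕ) + 1)) (Fin ((ℓ : ℕ) + 1)) F :=
        Matrix.of fun r t'' : Fin ((ℓ : ℕ) + 1) =>
          A (Fin.castLE hℓ1s r) (cemb t'') with hN
      set y : Fin ((ℓ : ℕ) + 1) → F := fun r => v (Fin.castLE hℓ1s r) t with hy
      have hvec : Matrix.vecMul y N = 0 := by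
        funext t''
        have hmem : cemb t'' ∈ Z := Z.orderEmbOfFin_mem hZc t''
        have hz : p (cemb t'', t) = 0 :=
          (Finset.mem_filter.mp (hZsub hmem)).2
        rw [hvp] at hz
        have hrestrict : ∑ i : Fin s, A i (cemb t'') * v i t
            = ∑ r : Fin ((ℓ : ℕ) + 1),
                A (Fin.castLE hℓ1s r) (cemb t'') * v (Fin.castLE hℓ1s r) t := by
          exact Stmt13Aux.sum_restrict (fun i => A i (cemb t'') * v i t) ℓ hℓ1s
            (fun i hi => by
              show A i (cemb t'') * v i t = 0
              rw [hℓmax i hi, Pi.zero_apply, mul_zero])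
        rw [hrestrict] at hz
        rw [Matrix.vecMul, Pi.zero_apply]
        rw [← hz]
        apply Finset.sum_congr rfl
        intro r _
        rw [hN, hy]
        simp only [Matrix.of_apply, dotProduct]
        ring
      have hy0 := Matrix.eq_zero_of_vecMul_eq_zero hdet hvec
      apply hvt
      have := congrFun hy0 ⟨(ℓ : ℕ), lt_add_one _⟩
      rw [hy] at this
      simp only [Pi.zero_apply] at this
      have hcast : Fin.castLE hℓ1s ⟨(ℓ : ℕ), lt_add_one _⟩ = ℓ := by
        ext; rfl
      rwa [hcast] at this
    -- counting
    have hnorm : hammingNorm p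
        = ∑ t : Fin m, (Finset.univ.filter (fun j : Fin h => p (j, t) ≠ 0)).card := by
      unfold hammingNorm
      rw [Finset.card_filter]
      rw [Fintype.sum_prod_type]
      rw [Finset.sum_comm]
      apply Finset.sum_congr rfl
      intro t _
      rw [Finset.card_filter]
    have hwt : hammingNorm (v ℓ)
        = (Finset.univ.filter (fun t : Fin m => v ℓ t ≠ 0)).card := rfl
    have hdℓ : d ℓ ≤ hammingNorm (v ℓ) := by
      rw [← hd ℓ]
      exact Nat.sInf_le ⟨v ℓ, hvC ℓ, hℓne, rfl⟩
    have hsum : (h - (ℓ : ℕ)) * hammingNorm (v ℓ) ≤ hammingNorm p := by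
      rw [hnorm, hwt]
      calc (h - (ℓ : ℕ)) * (Finset.univ.filter (fun t : Fin m => v ℓ t ≠ 0)).card
          = ∑ t ∈ Finset.univ.filter (fun t : Fin m => v ℓ t ≠ 0), (h - (ℓ : ℕ)) := by
            rw [Finset.sum_const, smul_eq_mul, mul_comm]
        _ = ∑ t : Fin m, (if v ℓ t ≠ 0 then (h - (ℓ : ℕ)) else 0) := by
            rw [Finset.sum_filter]
        _ ≤ ∑ t : Fin m, (Finset.univ.filter (fun j : Fin h => p (j, t) ≠ 0)).card := by
            apply Finset.sum_le_sum
            intro t _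
            split_ifs with hvt
            · exact hcol t hvt
            · exact Nat.zero_le _
    have hfinal : (h - (ℓ : ℕ)) * d ℓ ≤ hammingNorm p :=
      le_trans (Nat.mul_le_mul_left _ hdℓ) hsum
    calc sInf { v | ∃ i : Fin s, v = (h - (i : ℕ)) * d i }
        ≤ (h - (ℓ : ℕ)) * d ℓ := Nat.sInf_le ⟨ℓ, rfl⟩
      _ ≤ hammingNorm p := hfinal
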